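/- Let g = 4 and let B be the positive definite symmetric bilinear form on ℝ⁴ associated to the quadratic form Σ_{i=1}^{4} r_i x_i² + Σ_{1 ≤ i < j ≤ 4, (i,j) ≠ (1,2)} r_{ij} (x_i − x_j)² + r·q_ω, where q_ω(x) = 2(x₁²+x₂²+x₃²+x₄²) + 2x₁x₂ − 2(x₁+x₂)(x₃+x₄), and all r_i, r_{ij}, r > 0 (i.e. B lies in the interior of the Voronoi cone V₂). Then both conv{0, s₁, s₂, s₁+s₂+s₃, s₁+s₂+s₃+s₄} and conv{s₁, s₂, s₁+s₂, s₁+s₂+s₃, s₁+s₂+s₃+s₄} are Delaunay cells of B. -/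

import Mathlib

open Matrix Set

noncomputable section

/-- The standard lattice `ℤ^g` sitting inside `ℝ^g`. -/
def latticePts (g : ℕ) : Set (Fin g → ℝ) :=
  Set.range (fun a : Fin g → ℤ => fun i => (a i : ℝ))

/-- `σ` is a (closed) Delaunay cell of the bilinear form `B`: there is an `α ∈ ℝ^g`
such that `σ` is the convex hull of the lattice points nearest to `α`
(with respect to the distance defined by `B`). -/
def IsDelaunayCell {g : ℕ} (B : (Fin g → ℝ) → (Fin g → ℝ) → ℝ)
    (σ : Set (Fin g → ℝ)) : Prop :=
  ∃ α : Fin g → ℝ, σ = convexHull ℝ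
    {a | a ∈ latticePts g ∧ ∀ b ∈ latticePts g, B (a - α) (a - α) ≤ B (b - α) (b - α)}

/-- `C(0,S)`: the cone generated by `S` over the nonnegative reals. -/
def cone0 {g : ℕ} (S : Set (Fin g → ℝ)) : Set (Fin g → ℝ) :=
  {x | ∃ r : ℝ, 0 ≤ r ∧ ∃ y ∈ convexHull ℝ S, x = r • y}

/-- `Semi(0, S ∩ ℤ^g)`: the additive submonoid generated by the lattice points of `S`. -/
def semi0 {g : ℕ} (S : Set (Fin g → ℝ)) : Set (Fin g → ℝ) :=
  (AddSubmonoid.closure (S ∩ latticePts g) : AddSubmonoid (Fin g → ℝ))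

/-- The standard basis vector `s_i` of `ℝ^g`. -/
def stdV (g : ℕ) (i : Fin g) : Fin g → ℝ := Pi.single i 1

/-- Translation of a subset of `ℝ^g` by a lattice vector `v ∈ ℤ^g`. -/
def zTrans {g : ℕ} (v : Fin g → ℤ) (S : Set (Fin g → ℝ)) : Set (Fin g → ℝ) :=
  (fun x => (fun i => (v i : ℝ)) + x) '' S

/-- The rank-one symmetric matrix of the squared linear form `(c ⬝ x)²`. -/
def sqM (c : Fin 4 → ℝ) : Matrix (Fin 4) (Fin 4) ℝ := vecMulVec c c

/-- The matrix of the quadratic form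
`q_ω(x) = 2(x₁²+x₂²+x₃²+x₄²) + 2x₁x₂ − 2(x₁+x₂)(x₃+x₄)`. -/
def Mω : Matrix (Fin 4) (Fin 4) ℝ :=
  !![(2:ℝ), 1, -1, -1; 1, 2, -1, -1; -1, -1, 2, 0; -1, -1, 0, 2]

/-- A point in the interior of the Voronoi cone `V₂`: the matrix of
`Σ rᵢ xᵢ² + Σ_{i<j, (i,j)≠(1,2)} r_{ij} (xᵢ-xⱼ)² + r·q_ω`. -/
def MV2 (r₁ r₂ r₃ r₄ r₁₃ r₁₄ r₂₃ r₂₄ r₃₄ r : ℝ) : Matrix (Fin 4) (Fin 4) ℝ :=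
  r₁ • sqM (stdV 4 0) + r₂ • sqM (stdV 4 1) + r₃ • sqM (stdV 4 2) + r₄ • sqM (stdV 4 3)
    + r₁₃ • sqM (stdV 4 0 - stdV 4 2) + r₁₄ • sqM (stdV 4 0 - stdV 4 3)
    + r₂₃ • sqM (stdV 4 1 - stdV 4 2) + r₂₄ • sqM (stdV 4 1 - stdV 4 3)
    + r₃₄ • sqM (stdV 4 2 - stdV 4 3) + r • Mω

-- integer helper lemmas
private lemma tnn (m : ℤ) : 0 ≤ ((m:ℝ))^2 - (m:ℝ) := by
  have h : (0:ℤ) ≤ m^2 - m := by nlinarith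
  exact_mod_cast h

private lemma tzero {m : ℤ} (h : ((m:ℝ))^2 - (m:ℝ) = 0) : m = 0 ∨ m = 1 := by
  have h' : (m:ℤ)^2 - m = 0 := by exact_mod_cast h
  have h2 : m * (m - 1) = 0 := by linear_combination h'
  rcases mul_eq_zero.mp h2 with h3 | h3
  · exact Or.inl h3
  · exact Or.inr (by omega)

private lemma sq1 {k : ℤ} (hk : k ≠ 0) : 1 ≤ k^2 := by
  rcases hk.lt_or_gt with h | h <;> nlinarith

private lemma omega2_ge (a b c d : ℤ) :
    1 ≤ (a+b-c-d-1)^2 + (a-1)^2 + (b-1)^2 + (c-d)^2 := by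
  have h : a+b-c-d-1 ≠ 0 ∨ a-1 ≠ 0 ∨ b-1 ≠ 0 ∨ c-d ≠ 0 := by omega
  rcases h with h|h|h|h <;>
    nlinarith [sq1 h, sq_nonneg (a+b-c-d-1), sq_nonneg (a-1), sq_nonneg (b-1), sq_nonneg (c-d)]

private lemma comb1 (a b c d : ℤ)
    (h0 : a = 0 ∨ a = 1) (h1 : b = 0 ∨ b = 1) (h2 : c = 0 ∨ c = 1) (h3 : d = 0 ∨ d = 1)
    (h13 : a - c = 0 ∨ a - c = 1) (h14 : a - d = 0 ∨ a - d = 1)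
    (h23 : b - c = 0 ∨ b - c = 1) (h24 : b - d = 0 ∨ b - d = 1)
    (h34 : c - d = 0 ∨ c - d = 1)
    (hu : a + b - c - d = 0 ∨ a + b - c - d = 1) :
    (a=0∧b=0∧c=0∧d=0) ∨ (a=1∧b=0∧c=0∧d=0) ∨ (a=0∧b=1∧c=0∧d=0) ∨
    (a=1∧b=1∧c=1∧d=0) ∨ (a=1∧b=1∧c=1∧d=1) := by
  have b13 : 0 ≤ a - c ∧ a - c ≤ 1 := by omega
  have b14 : 0 ≤ a - d ∧ a - d ≤ 1 := by omega
  have b23 : 0 ≤ b - c ∧ b - c ≤ 1 := by omega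
  have b24 : 0 ≤ b - d ∧ b - d ≤ 1 := by omega
  have b34 : 0 ≤ c - d ∧ c - d ≤ 1 := by omega
  have bu : 0 ≤ a + b - c - d ∧ a + b - c - d ≤ 1 := by omega
  clear h13 h14 h23 h24 h34 hu
  rcases h0 with rfl|rfl <;> rcases h1 with rfl|rfl <;> omega

private lemma comb2 (a b c d : ℤ)
    (h0 : a = 0 ∨ a = 1) (h1 : b = 0 ∨ b = 1) (h2 : c = 0 ∨ c = 1) (h3 : d = 0 ∨ d = 1)
    (h13 : a - c = 0 ∨ a - c = 1) (h14 : a - d = 0 ∨ a - d = 1)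
    (h23 : b - c = 0 ∨ b - c = 1) (h24 : b - d = 0 ∨ b - d = 1)
    (h34 : c - d = 0 ∨ c - d = 1)
    (hs : (a+b-c-d-1)^2 + (a-1)^2 + (b-1)^2 + (c-d)^2 = 1) :
    (a=1∧b=0∧c=0∧d=0) ∨ (a=0∧b=1∧c=0∧d=0) ∨ (a=1∧b=1∧c=0∧d=0) ∨
    (a=1∧b=1∧c=1∧d=0) ∨ (a=1∧b=1∧c=1∧d=1) := by
  rcases h0 with rfl|rfl <;> rcases h1 with rfl|rfl <;> rcases h2 with rfl|rfl <;>
    rcases h3 with rfl|rfl <;> revert hs h13 h14 h23 h24 h34 <;> norm_num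

private lemma quadQ (r₁ r₂ r₃ r₄ r₁₃ r₁₄ r₂₃ r₂₄ r₃₄ r : ℝ) (x y : Fin 4 → ℝ) :
    x ⬝ᵥ (MV2 r₁ r₂ r₃ r₄ r₁₃ r₁₄ r₂₃ r₂₄ r₃₄ r).mulVec y =
      r₁ * (x 0 * y 0) + r₂ * (x 1 * y 1) + r₃ * (x 2 * y 2) + r₄ * (x 3 * y 3)
      + r₁₃ * ((x 0 - x 2) * (y 0 - y 2)) + r₁₄ * ((x 0 - x 3) * (y 0 - y 3))
      + r₂₃ * ((x 1 - x 2) * (y 1 - y 2)) + r₂₄ * ((x 1 - x 3) * (y 1 - y 3))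
      + r₃₄ * ((x 2 - x 3) * (y 2 - y 3))
      + r * ((x 0 + x 1 - x 2 - x 3) * (y 0 + y 1 - y 2 - y 3)
           + x 0 * y 0 + x 1 * y 1 + (x 2 - x 3) * (y 2 - y 3)) := by
  simp [MV2, sqM, Mω, stdV, Matrix.mulVec, dotProduct, Fin.sum_univ_four,
        Matrix.vecMulVec_apply, Pi.single_apply, Matrix.vecHead, Matrix.vecTail]
  ring

private lemma symmQ (r₁ r₂ r₃ r₄ r₁₃ r₁₄ r₂₃ r₂₄ r₃₄ r : ℝ) (x y : Fin 4 → ℝ) :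
    x ⬝ᵥ (MV2 r₁ r₂ r₃ r₄ r₁₃ r₁₄ r₂₃ r₂₄ r₃₄ r).mulVec y
      = y ⬝ᵥ (MV2 r₁ r₂ r₃ r₄ r₁₃ r₁₄ r₂₃ r₂₄ r₃₄ r).mulVec x := by
  rw [quadQ, quadQ]; ring

private lemma expQ (r₁ r₂ r₃ r₄ r₁₃ r₁₄ r₂₃ r₂₄ r₃₄ r : ℝ) (u v : Fin 4 → ℝ) :
    (u - v) ⬝ᵥ (MV2 r₁ r₂ r₃ r₄ r₁₃ r₁₄ r₂₃ r₂₄ r₃₄ r).mulVec (u - v)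
      = u ⬝ᵥ (MV2 r₁ r₂ r₃ r₄ r₁₃ r₁₄ r₂₃ r₂₄ r₃₄ r).mulVec u
        - 2 * (u ⬝ᵥ (MV2 r₁ r₂ r₃ r₄ r₁₃ r₁₄ r₂₃ r₂₄ r₃₄ r).mulVec v)
        + v ⬝ᵥ (MV2 r₁ r₂ r₃ r₄ r₁₃ r₁₄ r₂₃ r₂₄ r₃₄ r).mulVec v := by
  rw [Matrix.mulVec_sub, dotProduct_sub, sub_dotProduct, sub_dotProduct,
      symmQ r₁ r₂ r₃ r₄ r₁₃ r₁₄ r₂₃ r₂₄ r₃₄ r v u]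
  ring

private lemma surjQ (r₁ r₂ r₃ r₄ r₁₃ r₁₄ r₂₃ r₂₄ r₃₄ r : ℝ)
    (h₁ : 0 < r₁) (h₂ : 0 < r₂) (h₃ : 0 < r₃) (h₄ : 0 < r₄)
    (h₁₃ : 0 < r₁₃) (h₁₄ : 0 < r₁₄)
    (h₂₃ : 0 < r₂₃) (h₂₄ : 0 < r₂₄) (h₃₄ : 0 < r₃₄) (hr : 0 < r) :
    Function.Surjective (MV2 r₁ r₂ r₃ r₄ r₁₃ r₁₄ r₂₃ r₂₄ r₃₄ r).mulVecLin := by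
  rw [← LinearMap.injective_iff_surjective, ← LinearMap.ker_eq_bot, LinearMap.ker_eq_bot']
  intro x hx
  have h0 : x ⬝ᵥ (MV2 r₁ r₂ r₃ r₄ r₁₃ r₁₄ r₂₃ r₂₄ r₃₄ r).mulVec x = 0 := by
    have hx' : (MV2 r₁ r₂ r₃ r₄ r₁₃ r₁₄ r₂₃ r₂₄ r₃₄ r).mulVec x = 0 := hx
    rw [hx', dotProduct_zero]
  rw [quadQ] at h0
  have n1 := mul_nonneg h₁.le (mul_self_nonneg (x 0))
  have n2 := mul_nonneg h₂.le (mul_self_nonneg (x 1))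
  have n3 := mul_nonneg h₃.le (mul_self_nonneg (x 2))
  have n4 := mul_nonneg h₄.le (mul_self_nonneg (x 3))
  have n13 := mul_nonneg h₁₃.le (mul_self_nonneg (x 0 - x 2))
  have n14 := mul_nonneg h₁₄.le (mul_self_nonneg (x 0 - x 3))
  have n23 := mul_nonneg h₂₃.le (mul_self_nonneg (x 1 - x 2))
  have n24 := mul_nonneg h₂₄.le (mul_self_nonneg (x 1 - x 3))
  have n34 := mul_nonneg h₃₄.le (mul_self_nonneg (x 2 - x 3))
  have nω : (0:ℝ) ≤ r * ((x 0 + x 1 - x 2 - x 3) * (x 0 + x 1 - x 2 - x 3)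
           + x 0 * x 0 + x 1 * x 1 + (x 2 - x 3) * (x 2 - x 3)) := by
    have := mul_self_nonneg (x 0 + x 1 - x 2 - x 3)
    have := mul_self_nonneg (x 0)
    have := mul_self_nonneg (x 1)
    have := mul_self_nonneg (x 2 - x 3)
    have : (0:ℝ) ≤ (x 0 + x 1 - x 2 - x 3) * (x 0 + x 1 - x 2 - x 3)
           + x 0 * x 0 + x 1 * x 1 + (x 2 - x 3) * (x 2 - x 3) := by linarith
    exact mul_nonneg hr.le this
  have key : ∀ i : Fin 4, x i * x i = 0 → x i = 0 := fun i h => mul_self_eq_zero.mp h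
  have e1 : x 0 = 0 := key 0 (by
    have hz : r₁ * (x 0 * x 0) = 0 := le_antisymm (by linarith) n1
    exact (mul_eq_zero.mp hz).resolve_left h₁.ne')
  have e2 : x 1 = 0 := key 1 (by
    have hz : r₂ * (x 1 * x 1) = 0 := le_antisymm (by linarith) n2
    exact (mul_eq_zero.mp hz).resolve_left h₂.ne')
  have e3 : x 2 = 0 := key 2 (by
    have hz : r₃ * (x 2 * x 2) = 0 := le_antisymm (by linarith) n3
    exact (mul_eq_zero.mp hz).resolve_left h₃.ne')
  have e4 : x 3 = 0 := key 3 (by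
    have hz : r₄ * (x 3 * x 3) = 0 := le_antisymm (by linarith) n4
    exact (mul_eq_zero.mp hz).resolve_left h₄.ne')
  funext i
  fin_cases i <;> simpa [e1, e2, e3, e4]

private def EE1 (r₁ r₂ r₃ r₄ r₁₃ r₁₄ r₂₃ r₂₄ r₃₄ r : ℝ) (x : Fin 4 → ℝ) : ℝ :=
  r₁ * ((x 0)^2 - x 0) + r₂ * ((x 1)^2 - x 1) + r₃ * ((x 2)^2 - x 2) + r₄ * ((x 3)^2 - x 3)
  + r₁₃ * ((x 0 - x 2)^2 - (x 0 - x 2)) + r₁₄ * ((x 0 - x 3)^2 - (x 0 - x 3))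
  + r₂₃ * ((x 1 - x 2)^2 - (x 1 - x 2)) + r₂₄ * ((x 1 - x 3)^2 - (x 1 - x 3))
  + r₃₄ * ((x 2 - x 3)^2 - (x 2 - x 3))
  + r * (((x 0 + x 1 - x 2 - x 3)^2 - (x 0 + x 1 - x 2 - x 3)) + ((x 0)^2 - x 0)
        + ((x 1)^2 - x 1) + ((x 2 - x 3)^2 - (x 2 - x 3)))

private def EE2 (r₁ r₂ r₃ r₄ r₁₃ r₁₄ r₂₃ r₂₄ r₃₄ r : ℝ) (x : Fin 4 → ℝ) : ℝ :=
  r₁ * ((x 0)^2 - x 0) + r₂ * ((x 1)^2 - x 1) + r₃ * ((x 2)^2 - x 2) + r₄ * ((x 3)^2 - x 3)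
  + r₁₃ * ((x 0 - x 2)^2 - (x 0 - x 2)) + r₁₄ * ((x 0 - x 3)^2 - (x 0 - x 3))
  + r₂₃ * ((x 1 - x 2)^2 - (x 1 - x 2)) + r₂₄ * ((x 1 - x 3)^2 - (x 1 - x 3))
  + r₃₄ * ((x 2 - x 3)^2 - (x 2 - x 3))
  + r * ((x 0 + x 1 - x 2 - x 3 - 1)^2 + (x 0 - 1)^2 + (x 1 - 1)^2 + (x 2 - x 3)^2 - 1)

private lemma key1 (r₁ r₂ r₃ r₄ r₁₃ r₁₄ r₂₃ r₂₄ r₃₄ r : ℝ) (α : Fin 4 → ℝ)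
    (hα : (MV2 r₁ r₂ r₃ r₄ r₁₃ r₁₄ r₂₃ r₂₄ r₃₄ r).mulVec α =
      ![(r₁+r₁₃+r₁₄+2*r)/2, (r₂+r₂₃+r₂₄+2*r)/2, (r₃-r₁₃-r₂₃+r₃₄)/2,
        (r₄-r₁₄-r₂₄-r₃₄-2*r)/2]) (x : Fin 4 → ℝ) :
    (x - α) ⬝ᵥ (MV2 r₁ r₂ r₃ r₄ r₁₃ r₁₄ r₂₃ r₂₄ r₃₄ r).mulVec (x - α)
      = ((0:Fin 4 → ℝ) - α) ⬝ᵥ (MV2 r₁ r₂ r₃ r₄ r₁₃ r₁₄ r₂₃ r₂₄ r₃₄ r).mulVec ((0:Fin 4 → ℝ) - α)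
        + EE1 r₁ r₂ r₃ r₄ r₁₃ r₁₄ r₂₃ r₂₄ r₃₄ r x := by
  rw [expQ, expQ, hα, quadQ r₁ r₂ r₃ r₄ r₁₃ r₁₄ r₂₃ r₂₄ r₃₄ r x x,
      quadQ r₁ r₂ r₃ r₄ r₁₃ r₁₄ r₂₃ r₂₄ r₃₄ r 0 0]
  simp only [EE1, dotProduct, Fin.sum_univ_four, Pi.zero_apply,
    Matrix.cons_val_zero, Matrix.cons_val_one, Matrix.head_cons,
    Matrix.cons_val_two, Matrix.tail_cons, Matrix.cons_val_three]
  ring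

private lemma key2 (r₁ r₂ r₃ r₄ r₁₃ r₁₄ r₂₃ r₂₄ r₃₄ r : ℝ) (α : Fin 4 → ℝ)
    (hα : (MV2 r₁ r₂ r₃ r₄ r₁₃ r₁₄ r₂₃ r₂₄ r₃₄ r).mulVec α =
      ![(r₁+r₁₃+r₁₄+4*r)/2, (r₂+r₂₃+r₂₄+4*r)/2, (r₃-r₁₃-r₂₃+r₃₄-2*r)/2,
        (r₄-r₁₄-r₂₄-r₃₄-2*r)/2]) (x : Fin 4 → ℝ) :
    (x - α) ⬝ᵥ (MV2 r₁ r₂ r₃ r₄ r₁₃ r₁₄ r₂₃ r₂₄ r₃₄ r).mulVec (x - α)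
      = (stdV 4 0 - α) ⬝ᵥ (MV2 r₁ r₂ r₃ r₄ r₁₃ r₁₄ r₂₃ r₂₄ r₃₄ r).mulVec (stdV 4 0 - α)
        + EE2 r₁ r₂ r₃ r₄ r₁₃ r₁₄ r₂₃ r₂₄ r₃₄ r x := by
  have hs0 : stdV 4 0 0 = 1 := by simp [stdV]
  have hs1 : stdV 4 0 1 = 0 := by simp [stdV]
  have hs2 : stdV 4 0 2 = 0 := by simp [stdV]
  have hs3 : stdV 4 0 3 = 0 := by simp [stdV]
  rw [expQ, expQ, hα, quadQ r₁ r₂ r₃ r₄ r₁₃ r₁₄ r₂₃ r₂₄ r₃₄ r x x,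
      quadQ r₁ r₂ r₃ r₄ r₁₃ r₁₄ r₂₃ r₂₄ r₃₄ r (stdV 4 0) (stdV 4 0)]
  simp only [EE2, hs0, hs1, hs2, hs3, dotProduct, Fin.sum_univ_four,
    Matrix.cons_val_zero, Matrix.cons_val_one, Matrix.head_cons,
    Matrix.cons_val_two, Matrix.tail_cons, Matrix.cons_val_three]
  ring

section
variable {r₁ r₂ r₃ r₄ r₁₃ r₁₄ r₂₃ r₂₄ r₃₄ r : ℝ}

private lemma EE1_nonneg
    (h₁ : 0 < r₁) (h₂ : 0 < r₂) (h₃ : 0 < r₃) (h₄ : 0 < r₄)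
    (h₁₃ : 0 < r₁₃) (h₁₄ : 0 < r₁₄)
    (h₂₃ : 0 < r₂₃) (h₂₄ : 0 < r₂₄) (h₃₄ : 0 < r₃₄) (hr : 0 < r) (n : Fin 4 → ℤ) :
    0 ≤ EE1 r₁ r₂ r₃ r₄ r₁₃ r₁₄ r₂₃ r₂₄ r₃₄ r (fun i => (n i : ℝ)) := by
  have t0 := tnn (n 0); have t1 := tnn (n 1); have t2 := tnn (n 2); have t3 := tnn (n 3)
  have t13 := tnn (n 0 - n 2); have t14 := tnn (n 0 - n 3)
  have t23 := tnn (n 1 - n 2); have t24 := tnn (n 1 - n 3); have t34 := tnn (n 2 - n 3)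
  have tu := tnn (n 0 + n 1 - n 2 - n 3)
  push_cast at t13 t14 t23 t24 t34 tu
  simp only [EE1]
  have fω : (0:ℝ) ≤ r * ((((n 0:ℝ) + n 1 - n 2 - n 3)^2 - ((n 0:ℝ) + n 1 - n 2 - n 3))
      + (((n 0:ℝ))^2 - (n 0:ℝ)) + (((n 1:ℝ))^2 - (n 1:ℝ))
      + (((n 2:ℝ) - n 3)^2 - ((n 2:ℝ) - n 3))) :=
    mul_nonneg hr.le (by linarith)
  have f1 := mul_nonneg h₁.le t0
  have f2 := mul_nonneg h₂.le t1
  have f3 := mul_nonneg h₃.le t2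
  have f4 := mul_nonneg h₄.le t3
  have f13 := mul_nonneg h₁₃.le t13
  have f14 := mul_nonneg h₁₄.le t14
  have f23 := mul_nonneg h₂₃.le t23
  have f24 := mul_nonneg h₂₄.le t24
  have f34 := mul_nonneg h₃₄.le t34
  linarith

private lemma EE1_zero
    (h₁ : 0 < r₁) (h₂ : 0 < r₂) (h₃ : 0 < r₃) (h₄ : 0 < r₄)
    (h₁₃ : 0 < r₁₃) (h₁₄ : 0 < r₁₄)
    (h₂₃ : 0 < r₂₃) (h₂₄ : 0 < r₂₄) (h₃₄ : 0 < r₃₄) (hr : 0 < r) (n : Fin 4 → ℤ)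
    (h : EE1 r₁ r₂ r₃ r₄ r₁₃ r₁₄ r₂₃ r₂₄ r₃₄ r (fun i => (n i : ℝ)) = 0) :
    (n 0=0∧n 1=0∧n 2=0∧n 3=0) ∨ (n 0=1∧n 1=0∧n 2=0∧n 3=0) ∨ (n 0=0∧n 1=1∧n 2=0∧n 3=0) ∨
    (n 0=1∧n 1=1∧n 2=1∧n 3=0) ∨ (n 0=1∧n 1=1∧n 2=1∧n 3=1) := by
  have t0 := tnn (n 0); have t1 := tnn (n 1); have t2 := tnn (n 2); have t3 := tnn (n 3)
  have t13 := tnn (n 0 - n 2); have t14 := tnn (n 0 - n 3)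
  have t23 := tnn (n 1 - n 2); have t24 := tnn (n 1 - n 3); have t34 := tnn (n 2 - n 3)
  have tu := tnn (n 0 + n 1 - n 2 - n 3)
  push_cast at t13 t14 t23 t24 t34 tu
  simp only [EE1] at h
  have Sω : (0:ℝ) ≤ (((n 0:ℝ) + n 1 - n 2 - n 3)^2 - ((n 0:ℝ) + n 1 - n 2 - n 3))
      + (((n 0:ℝ))^2 - (n 0:ℝ)) + (((n 1:ℝ))^2 - (n 1:ℝ))
      + (((n 2:ℝ) - n 3)^2 - ((n 2:ℝ) - n 3)) := by linarith
  have fω : (0:ℝ) ≤ r * ((((n 0:ℝ) + n 1 - n 2 - n 3)^2 - ((n 0:ℝ) + n 1 - n 2 - n 3))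
      + (((n 0:ℝ))^2 - (n 0:ℝ)) + (((n 1:ℝ))^2 - (n 1:ℝ))
      + (((n 2:ℝ) - n 3)^2 - ((n 2:ℝ) - n 3))) := mul_nonneg hr.le Sω
  have f1 := mul_nonneg h₁.le t0
  have f2 := mul_nonneg h₂.le t1
  have f3 := mul_nonneg h₃.le t2
  have f4 := mul_nonneg h₄.le t3
  have f13 := mul_nonneg h₁₃.le t13
  have f14 := mul_nonneg h₁₄.le t14
  have f23 := mul_nonneg h₂₃.le t23
  have f24 := mul_nonneg h₂₄.le t24
  have f34 := mul_nonneg h₃₄.le t34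
  have z1 : (((n 0:ℝ))^2 - (n 0:ℝ)) = 0 :=
    ((mul_eq_zero.mp (le_antisymm (by linarith) f1)).resolve_left h₁.ne')
  have z2 : (((n 1:ℝ))^2 - (n 1:ℝ)) = 0 :=
    ((mul_eq_zero.mp (le_antisymm (by linarith) f2)).resolve_left h₂.ne')
  have z3 : (((n 2:ℝ))^2 - (n 2:ℝ)) = 0 :=
    ((mul_eq_zero.mp (le_antisymm (by linarith) f3)).resolve_left h₃.ne')
  have z4 : (((n 3:ℝ))^2 - (n 3:ℝ)) = 0 :=
    ((mul_eq_zero.mp (le_antisymm (by linarith) f4)).resolve_left h₄.ne')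
  have z13 : (((n 0:ℝ) - n 2)^2 - ((n 0:ℝ) - n 2)) = 0 :=
    ((mul_eq_zero.mp (le_antisymm (by linarith) f13)).resolve_left h₁₃.ne')
  have z14 : (((n 0:ℝ) - n 3)^2 - ((n 0:ℝ) - n 3)) = 0 :=
    ((mul_eq_zero.mp (le_antisymm (by linarith) f14)).resolve_left h₁₄.ne')
  have z23 : (((n 1:ℝ) - n 2)^2 - ((n 1:ℝ) - n 2)) = 0 :=
    ((mul_eq_zero.mp (le_antisymm (by linarith) f23)).resolve_left h₂₃.ne')
  have z24 : (((n 1:ℝ) - n 3)^2 - ((n 1:ℝ) - n 3)) = 0 :=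
    ((mul_eq_zero.mp (le_antisymm (by linarith) f24)).resolve_left h₂₄.ne')
  have z34 : (((n 2:ℝ) - n 3)^2 - ((n 2:ℝ) - n 3)) = 0 :=
    ((mul_eq_zero.mp (le_antisymm (by linarith) f34)).resolve_left h₃₄.ne')
  have zS : (((n 0:ℝ) + n 1 - n 2 - n 3)^2 - ((n 0:ℝ) + n 1 - n 2 - n 3))
      + (((n 0:ℝ))^2 - (n 0:ℝ)) + (((n 1:ℝ))^2 - (n 1:ℝ))
      + (((n 2:ℝ) - n 3)^2 - ((n 2:ℝ) - n 3)) = 0 :=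
    ((mul_eq_zero.mp (le_antisymm (by linarith) fω)).resolve_left hr.ne')
  have zu : (((n 0:ℝ) + n 1 - n 2 - n 3)^2 - ((n 0:ℝ) + n 1 - n 2 - n 3)) = 0 := by
    linarith
  have d1 := tzero z1
  have d2 := tzero z2
  have d3 := tzero z3
  have d4 := tzero z4
  have d13 := tzero (m := n 0 - n 2) (by push_cast; linarith)
  have d14 := tzero (m := n 0 - n 3) (by push_cast; linarith)
  have d23 := tzero (m := n 1 - n 2) (by push_cast; linarith)
  have d24 := tzero (m := n 1 - n 3) (by push_cast; linarith)
  have d34 := tzero (m := n 2 - n 3) (by push_cast; linarith)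
  have du := tzero (m := n 0 + n 1 - n 2 - n 3) (by push_cast; linarith)
  exact comb1 (n 0) (n 1) (n 2) (n 3) d1 d2 d3 d4 d13 d14 d23 d24 d34 du

end

section
variable {r₁ r₂ r₃ r₄ r₁₃ r₁₄ r₂₃ r₂₄ r₃₄ r : ℝ}

private lemma EE2_nonneg
    (h₁ : 0 < r₁) (h₂ : 0 < r₂) (h₃ : 0 < r₃) (h₄ : 0 < r₄)
    (h₁₃ : 0 < r₁₃) (h₁₄ : 0 < r₁₄)
    (h₂₃ : 0 < r₂₃) (h₂₄ : 0 < r₂₄) (h₃₄ : 0 < r₃₄) (hr : 0 < r) (n : Fin 4 → ℤ) :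
    0 ≤ EE2 r₁ r₂ r₃ r₄ r₁₃ r₁₄ r₂₃ r₂₄ r₃₄ r (fun i => (n i : ℝ)) := by
  have t0 := tnn (n 0); have t1 := tnn (n 1); have t2 := tnn (n 2); have t3 := tnn (n 3)
  have t13 := tnn (n 0 - n 2); have t14 := tnn (n 0 - n 3)
  have t23 := tnn (n 1 - n 2); have t24 := tnn (n 1 - n 3); have t34 := tnn (n 2 - n 3)
  have hω : (1:ℝ) ≤ ((n 0:ℝ) + n 1 - n 2 - n 3 - 1)^2 + ((n 0:ℝ) - 1)^2
      + ((n 1:ℝ) - 1)^2 + ((n 2:ℝ) - n 3)^2 := by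
    exact_mod_cast omega2_ge (n 0) (n 1) (n 2) (n 3)
  push_cast at t13 t14 t23 t24 t34
  simp only [EE2]
  have fω : (0:ℝ) ≤ r * (((n 0:ℝ) + n 1 - n 2 - n 3 - 1)^2 + ((n 0:ℝ) - 1)^2
      + ((n 1:ℝ) - 1)^2 + ((n 2:ℝ) - n 3)^2 - 1) := mul_nonneg hr.le (by linarith)
  have f1 := mul_nonneg h₁.le t0
  have f2 := mul_nonneg h₂.le t1
  have f3 := mul_nonneg h₃.le t2
  have f4 := mul_nonneg h₄.le t3
  have f13 := mul_nonneg h₁₃.le t13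
  have f14 := mul_nonneg h₁₄.le t14
  have f23 := mul_nonneg h₂₃.le t23
  have f24 := mul_nonneg h₂₄.le t24
  have f34 := mul_nonneg h₃₄.le t34
  linarith

private lemma EE2_zero
    (h₁ : 0 < r₁) (h₂ : 0 < r₂) (h₃ : 0 < r₃) (h₄ : 0 < r₄)
    (h₁₃ : 0 < r₁₃) (h₁₄ : 0 < r₁₄)
    (h₂₃ : 0 < r₂₃) (h₂₄ : 0 < r₂₄) (h₃₄ : 0 < r₃₄) (hr : 0 < r) (n : Fin 4 → ℤ)
    (h : EE2 r₁ r₂ r₃ r₄ r₁₃ r₁₄ r₂₃ r₂₄ r₃₄ r (fun i => (n i : ℝ)) = 0) :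
    (n 0=1∧n 1=0∧n 2=0∧n 3=0) ∨ (n 0=0∧n 1=1∧n 2=0∧n 3=0) ∨ (n 0=1∧n 1=1∧n 2=0∧n 3=0) ∨
    (n 0=1∧n 1=1∧n 2=1∧n 3=0) ∨ (n 0=1∧n 1=1∧n 2=1∧n 3=1) := by
  have t0 := tnn (n 0); have t1 := tnn (n 1); have t2 := tnn (n 2); have t3 := tnn (n 3)
  have t13 := tnn (n 0 - n 2); have t14 := tnn (n 0 - n 3)
  have t23 := tnn (n 1 - n 2); have t24 := tnn (n 1 - n 3); have t34 := tnn (n 2 - n 3)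
  have hω : (1:ℝ) ≤ ((n 0:ℝ) + n 1 - n 2 - n 3 - 1)^2 + ((n 0:ℝ) - 1)^2
      + ((n 1:ℝ) - 1)^2 + ((n 2:ℝ) - n 3)^2 := by
    exact_mod_cast omega2_ge (n 0) (n 1) (n 2) (n 3)
  push_cast at t13 t14 t23 t24 t34
  simp only [EE2] at h
  have fω : (0:ℝ) ≤ r * (((n 0:ℝ) + n 1 - n 2 - n 3 - 1)^2 + ((n 0:ℝ) - 1)^2
      + ((n 1:ℝ) - 1)^2 + ((n 2:ℝ) - n 3)^2 - 1) := mul_nonneg hr.le (by linarith)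
  have f1 := mul_nonneg h₁.le t0
  have f2 := mul_nonneg h₂.le t1
  have f3 := mul_nonneg h₃.le t2
  have f4 := mul_nonneg h₄.le t3
  have f13 := mul_nonneg h₁₃.le t13
  have f14 := mul_nonneg h₁₄.le t14
  have f23 := mul_nonneg h₂₃.le t23
  have f24 := mul_nonneg h₂₄.le t24
  have f34 := mul_nonneg h₃₄.le t34
  have z1 : (((n 0:ℝ))^2 - (n 0:ℝ)) = 0 :=
    ((mul_eq_zero.mp (le_antisymm (by linarith) f1)).resolve_left h₁.ne')
  have z2 : (((n 1:ℝ))^2 - (n 1:ℝ)) = 0 :=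
    ((mul_eq_zero.mp (le_antisymm (by linarith) f2)).resolve_left h₂.ne')
  have z3 : (((n 2:ℝ))^2 - (n 2:ℝ)) = 0 :=
    ((mul_eq_zero.mp (le_antisymm (by linarith) f3)).resolve_left h₃.ne')
  have z4 : (((n 3:ℝ))^2 - (n 3:ℝ)) = 0 :=
    ((mul_eq_zero.mp (le_antisymm (by linarith) f4)).resolve_left h₄.ne')
  have z13 : (((n 0:ℝ) - n 2)^2 - ((n 0:ℝ) - n 2)) = 0 :=
    ((mul_eq_zero.mp (le_antisymm (by linarith) f13)).resolve_left h₁₃.ne')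
  have z14 : (((n 0:ℝ) - n 3)^2 - ((n 0:ℝ) - n 3)) = 0 :=
    ((mul_eq_zero.mp (le_antisymm (by linarith) f14)).resolve_left h₁₄.ne')
  have z23 : (((n 1:ℝ) - n 2)^2 - ((n 1:ℝ) - n 2)) = 0 :=
    ((mul_eq_zero.mp (le_antisymm (by linarith) f23)).resolve_left h₂₃.ne')
  have z24 : (((n 1:ℝ) - n 3)^2 - ((n 1:ℝ) - n 3)) = 0 :=
    ((mul_eq_zero.mp (le_antisymm (by linarith) f24)).resolve_left h₂₄.ne')
  have z34 : (((n 2:ℝ) - n 3)^2 - ((n 2:ℝ) - n 3)) = 0 :=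
    ((mul_eq_zero.mp (le_antisymm (by linarith) f34)).resolve_left h₃₄.ne')
  have zS : ((n 0:ℝ) + n 1 - n 2 - n 3 - 1)^2 + ((n 0:ℝ) - 1)^2
      + ((n 1:ℝ) - 1)^2 + ((n 2:ℝ) - n 3)^2 - 1 = 0 :=
    ((mul_eq_zero.mp (le_antisymm (by linarith) fω)).resolve_left hr.ne')
  have d1 := tzero z1
  have d2 := tzero z2
  have d3 := tzero z3
  have d4 := tzero z4
  have d13 := tzero (m := n 0 - n 2) (by push_cast; linarith)
  have d14 := tzero (m := n 0 - n 3) (by push_cast; linarith)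
  have d23 := tzero (m := n 1 - n 2) (by push_cast; linarith)
  have d24 := tzero (m := n 1 - n 3) (by push_cast; linarith)
  have d34 := tzero (m := n 2 - n 3) (by push_cast; linarith)
  have hsZ : (n 0 + n 1 - n 2 - n 3 - 1)^2 + (n 0 - 1)^2 + (n 1 - 1)^2 + (n 2 - n 3)^2 = 1 := by
    have : ((n 0:ℝ) + n 1 - n 2 - n 3 - 1)^2 + ((n 0:ℝ) - 1)^2
      + ((n 1:ℝ) - 1)^2 + ((n 2:ℝ) - n 3)^2 = 1 := by linarith
    exact_mod_cast this
  exact comb2 (n 0) (n 1) (n 2) (n 3) d1 d2 d3 d4 d13 d14 d23 d24 d34 hsZ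

end

section
variable {r₁ r₂ r₃ r₄ r₁₃ r₁₄ r₂₃ r₂₄ r₃₄ r : ℝ}

private lemma finv0 : ((0:Fin 4):ℕ) = 0 := rfl
private lemma finv1 : ((1:Fin 4):ℕ) = 1 := rfl
private lemma finv2 : ((2:Fin 4):ℕ) = 2 := rfl
private lemma finv3 : ((3:Fin 4):ℕ) = 3 := rfl

private lemma coe0 : (fun i => (((0 : Fin 4 → ℤ)) i : ℝ)) = (0 : Fin 4 → ℝ) := by
  funext i; norm_num

private lemma coe1 : (fun i => ((![1,0,0,0] : Fin 4 → ℤ) i : ℝ)) = stdV 4 0 := by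
  funext i; fin_cases i <;> norm_num [stdV, Pi.single_apply, Fin.ext_iff, finv0, finv1, finv2, finv3]

private lemma coe2 : (fun i => ((![0,1,0,0] : Fin 4 → ℤ) i : ℝ)) = stdV 4 1 := by
  funext i; fin_cases i <;> norm_num [stdV, Pi.single_apply, Fin.ext_iff, finv0, finv1, finv2, finv3]

private lemma coe12 : (fun i => ((![1,1,0,0] : Fin 4 → ℤ) i : ℝ)) = stdV 4 0 + stdV 4 1 := by
  funext i; fin_cases i <;> norm_num [stdV, Pi.single_apply, Fin.ext_iff, finv0, finv1, finv2, finv3]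

private lemma coe3 : (fun i => ((![1,1,1,0] : Fin 4 → ℤ) i : ℝ))
    = stdV 4 0 + stdV 4 1 + stdV 4 2 := by
  funext i; fin_cases i <;> norm_num [stdV, Pi.single_apply, Fin.ext_iff, finv0, finv1, finv2, finv3]

private lemma coe4 : (fun i => ((![1,1,1,1] : Fin 4 → ℤ) i : ℝ))
    = stdV 4 0 + stdV 4 1 + stdV 4 2 + stdV 4 3 := by
  funext i; fin_cases i <;> norm_num [stdV, Pi.single_apply, Fin.ext_iff, finv0, finv1, finv2, finv3]

private lemma set1_eq
    (h₁ : 0 < r₁) (h₂ : 0 < r₂) (h₃ : 0 < r₃) (h₄ : 0 < r₄)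
    (h₁₃ : 0 < r₁₃) (h₁₄ : 0 < r₁₄)
    (h₂₃ : 0 < r₂₃) (h₂₄ : 0 < r₂₄) (h₃₄ : 0 < r₃₄) (hr : 0 < r) (α : Fin 4 → ℝ)
    (hα : (MV2 r₁ r₂ r₃ r₄ r₁₃ r₁₄ r₂₃ r₂₄ r₃₄ r).mulVec α =
      ![(r₁+r₁₃+r₁₄+2*r)/2, (r₂+r₂₃+r₂₄+2*r)/2, (r₃-r₁₃-r₂₃+r₃₄)/2,
        (r₄-r₁₄-r₂₄-r₃₄-2*r)/2]) :
    {a : Fin 4 → ℝ | a ∈ latticePts 4 ∧ ∀ b ∈ latticePts 4,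
      (a - α) ⬝ᵥ (MV2 r₁ r₂ r₃ r₄ r₁₃ r₁₄ r₂₃ r₂₄ r₃₄ r).mulVec (a - α)
        ≤ (b - α) ⬝ᵥ (MV2 r₁ r₂ r₃ r₄ r₁₃ r₁₄ r₂₃ r₂₄ r₃₄ r).mulVec (b - α)}
    = {(0 : Fin 4 → ℝ), stdV 4 0, stdV 4 1, stdV 4 0 + stdV 4 1 + stdV 4 2,
        stdV 4 0 + stdV 4 1 + stdV 4 2 + stdV 4 3} := by
  have hminD : ∀ b ∈ latticePts 4,
      ((0 : Fin 4 → ℝ) - α) ⬝ᵥ (MV2 r₁ r₂ r₃ r₄ r₁₃ r₁₄ r₂₃ r₂₄ r₃₄ r).mulVec ((0:Fin 4 → ℝ) - α)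
        ≤ (b - α) ⬝ᵥ (MV2 r₁ r₂ r₃ r₄ r₁₃ r₁₄ r₂₃ r₂₄ r₃₄ r).mulVec (b - α) := by
    rintro b ⟨m, rfl⟩
    have hk := key1 r₁ r₂ r₃ r₄ r₁₃ r₁₄ r₂₃ r₂₄ r₃₄ r α hα (fun i => (m i : ℝ))
    have hnn := EE1_nonneg h₁ h₂ h₃ h₄ h₁₃ h₁₄ h₂₃ h₂₄ h₃₄ hr m
    linarith
  -- values of EE1 at the five vertices
  have hE0 : EE1 r₁ r₂ r₃ r₄ r₁₃ r₁₄ r₂₃ r₂₄ r₃₄ r (0 : Fin 4 → ℝ) = 0 := by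
    rw [← coe0]; norm_num [EE1, Matrix.cons_val_two, Matrix.cons_val_three, Matrix.tail_cons, Matrix.head_cons]
  have hE1 : EE1 r₁ r₂ r₃ r₄ r₁₃ r₁₄ r₂₃ r₂₄ r₃₄ r (stdV 4 0) = 0 := by
    rw [← coe1]; norm_num [EE1, Matrix.cons_val_two, Matrix.cons_val_three, Matrix.tail_cons, Matrix.head_cons]
  have hE2 : EE1 r₁ r₂ r₃ r₄ r₁₃ r₁₄ r₂₃ r₂₄ r₃₄ r (stdV 4 1) = 0 := by
    rw [← coe2]; norm_num [EE1, Matrix.cons_val_two, Matrix.cons_val_three, Matrix.tail_cons, Matrix.head_cons]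
  have hE3 : EE1 r₁ r₂ r₃ r₄ r₁₃ r₁₄ r₂₃ r₂₄ r₃₄ r (stdV 4 0 + stdV 4 1 + stdV 4 2) = 0 := by
    rw [← coe3]; norm_num [EE1, Matrix.cons_val_two, Matrix.cons_val_three, Matrix.tail_cons, Matrix.head_cons]
  have hE4 : EE1 r₁ r₂ r₃ r₄ r₁₃ r₁₄ r₂₃ r₂₄ r₃₄ r
      (stdV 4 0 + stdV 4 1 + stdV 4 2 + stdV 4 3) = 0 := by
    rw [← coe4]; norm_num [EE1, Matrix.cons_val_two, Matrix.cons_val_three, Matrix.tail_cons, Matrix.head_cons]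
  ext x
  simp only [Set.mem_setOf_eq, Set.mem_insert_iff, Set.mem_singleton_iff]
  constructor
  · rintro ⟨⟨n, rfl⟩, hmin⟩
    have h0mem : (0 : Fin 4 → ℝ) ∈ latticePts 4 := ⟨0, coe0⟩
    have hle := hmin 0 h0mem
    have hk := key1 r₁ r₂ r₃ r₄ r₁₃ r₁₄ r₂₃ r₂₄ r₃₄ r α hα (fun i => (n i : ℝ))
    have hnn := EE1_nonneg h₁ h₂ h₃ h₄ h₁₃ h₁₄ h₂₃ h₂₄ h₃₄ hr n
    have hz : EE1 r₁ r₂ r₃ r₄ r₁₃ r₁₄ r₂₃ r₂₄ r₃₄ r (fun i => (n i : ℝ)) = 0 := by linarith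
    rcases EE1_zero h₁ h₂ h₃ h₄ h₁₃ h₁₄ h₂₃ h₂₄ h₃₄ hr n hz with
      ⟨a,b,c,d⟩|⟨a,b,c,d⟩|⟨a,b,c,d⟩|⟨a,b,c,d⟩|⟨a,b,c,d⟩
    · exact Or.inl (by funext i; fin_cases i <;>
        norm_num [stdV, Pi.single_apply, Fin.ext_iff, finv0, finv1, finv2, finv3] <;>
        first | exact a | exact b | exact c | exact d)
    · refine Or.inr (Or.inl ?_)
      funext i; fin_cases i <;>
        norm_num [stdV, Pi.single_apply, Fin.ext_iff, finv0, finv1, finv2, finv3] <;>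
        first | exact a | exact b | exact c | exact d
    · refine Or.inr (Or.inr (Or.inl ?_))
      funext i; fin_cases i <;>
        norm_num [stdV, Pi.single_apply, Fin.ext_iff, finv0, finv1, finv2, finv3] <;>
        first | exact a | exact b | exact c | exact d
    · refine Or.inr (Or.inr (Or.inr (Or.inl ?_)))
      funext i; fin_cases i <;>
        norm_num [stdV, Pi.single_apply, Fin.ext_iff, finv0, finv1, finv2, finv3] <;>
        first | exact a | exact b | exact c | exact d
    · refine Or.inr (Or.inr (Or.inr (Or.inr ?_)))
      funext i; fin_cases i <;>
        norm_num [stdV, Pi.single_apply, Fin.ext_iff, finv0, finv1, finv2, finv3] <;>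
        first | exact a | exact b | exact c | exact d
  · intro hx
    have main : ∀ v : Fin 4 → ℝ, v ∈ latticePts 4 →
        EE1 r₁ r₂ r₃ r₄ r₁₃ r₁₄ r₂₃ r₂₄ r₃₄ r v = 0 →
        v ∈ latticePts 4 ∧ ∀ b ∈ latticePts 4,
          (v - α) ⬝ᵥ (MV2 r₁ r₂ r₃ r₄ r₁₃ r₁₄ r₂₃ r₂₄ r₃₄ r).mulVec (v - α)
            ≤ (b - α) ⬝ᵥ (MV2 r₁ r₂ r₃ r₄ r₁₃ r₁₄ r₂₃ r₂₄ r₃₄ r).mulVec (b - α) := by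
      intro v hv hEv
      refine ⟨hv, fun b hb => ?_⟩
      have hk := key1 r₁ r₂ r₃ r₄ r₁₃ r₁₄ r₂₃ r₂₄ r₃₄ r α hα v
      have := hminD b hb
      linarith
    rcases hx with rfl|rfl|rfl|rfl|rfl
    · exact main _ ⟨0, coe0⟩ hE0
    · exact main _ ⟨![1,0,0,0], coe1⟩ hE1
    · exact main _ ⟨![0,1,0,0], coe2⟩ hE2
    · exact main _ ⟨![1,1,1,0], coe3⟩ hE3
    · exact main _ ⟨![1,1,1,1], coe4⟩ hE4

end

section
variable {r₁ r₂ r₃ r₄ r₁₃ r₁₄ r₂₃ r₂₄ r₃₄ r : ℝ}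

private lemma set2_eq
    (h₁ : 0 < r₁) (h₂ : 0 < r₂) (h₃ : 0 < r₃) (h₄ : 0 < r₄)
    (h₁₃ : 0 < r₁₃) (h₁₄ : 0 < r₁₄)
    (h₂₃ : 0 < r₂₃) (h₂₄ : 0 < r₂₄) (h₃₄ : 0 < r₃₄) (hr : 0 < r) (α : Fin 4 → ℝ)
    (hα : (MV2 r₁ r₂ r₃ r₄ r₁₃ r₁₄ r₂₃ r₂₄ r₃₄ r).mulVec α =
      ![(r₁+r₁₃+r₁₄+4*r)/2, (r₂+r₂₃+r₂₄+4*r)/2, (r₃-r₁₃-r₂₃+r₃₄-2*r)/2,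
        (r₄-r₁₄-r₂₄-r₃₄-2*r)/2]) :
    {a : Fin 4 → ℝ | a ∈ latticePts 4 ∧ ∀ b ∈ latticePts 4,
      (a - α) ⬝ᵥ (MV2 r₁ r₂ r₃ r₄ r₁₃ r₁₄ r₂₃ r₂₄ r₃₄ r).mulVec (a - α)
        ≤ (b - α) ⬝ᵥ (MV2 r₁ r₂ r₃ r₄ r₁₃ r₁₄ r₂₃ r₂₄ r₃₄ r).mulVec (b - α)}
    = {stdV 4 0, stdV 4 1, stdV 4 0 + stdV 4 1, stdV 4 0 + stdV 4 1 + stdV 4 2,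
        stdV 4 0 + stdV 4 1 + stdV 4 2 + stdV 4 3} := by
  have hminD : ∀ b ∈ latticePts 4,
      (stdV 4 0 - α) ⬝ᵥ (MV2 r₁ r₂ r₃ r₄ r₁₃ r₁₄ r₂₃ r₂₄ r₃₄ r).mulVec (stdV 4 0 - α)
        ≤ (b - α) ⬝ᵥ (MV2 r₁ r₂ r₃ r₄ r₁₃ r₁₄ r₂₃ r₂₄ r₃₄ r).mulVec (b - α) := by
    rintro b ⟨m, rfl⟩
    have hk := key2 r₁ r₂ r₃ r₄ r₁₃ r₁₄ r₂₃ r₂₄ r₃₄ r α hα (fun i => (m i : ℝ))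
    have hnn := EE2_nonneg h₁ h₂ h₃ h₄ h₁₃ h₁₄ h₂₃ h₂₄ h₃₄ hr m
    linarith
  have hE1 : EE2 r₁ r₂ r₃ r₄ r₁₃ r₁₄ r₂₃ r₂₄ r₃₄ r (stdV 4 0) = 0 := by
    rw [← coe1]; norm_num [EE2, Matrix.cons_val_two, Matrix.cons_val_three, Matrix.tail_cons, Matrix.head_cons]
  have hE2 : EE2 r₁ r₂ r₃ r₄ r₁₃ r₁₄ r₂₃ r₂₄ r₃₄ r (stdV 4 1) = 0 := by
    rw [← coe2]; norm_num [EE2, Matrix.cons_val_two, Matrix.cons_val_three, Matrix.tail_cons, Matrix.head_cons]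
  have hE12 : EE2 r₁ r₂ r₃ r₄ r₁₃ r₁₄ r₂₃ r₂₄ r₃₄ r (stdV 4 0 + stdV 4 1) = 0 := by
    rw [← coe12]; norm_num [EE2, Matrix.cons_val_two, Matrix.cons_val_three, Matrix.tail_cons, Matrix.head_cons]
  have hE3 : EE2 r₁ r₂ r₃ r₄ r₁₃ r₁₄ r₂₃ r₂₄ r₃₄ r (stdV 4 0 + stdV 4 1 + stdV 4 2) = 0 := by
    rw [← coe3]; norm_num [EE2, Matrix.cons_val_two, Matrix.cons_val_three, Matrix.tail_cons, Matrix.head_cons]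
  have hE4 : EE2 r₁ r₂ r₃ r₄ r₁₃ r₁₄ r₂₃ r₂₄ r₃₄ r
      (stdV 4 0 + stdV 4 1 + stdV 4 2 + stdV 4 3) = 0 := by
    rw [← coe4]; norm_num [EE2, Matrix.cons_val_two, Matrix.cons_val_three, Matrix.tail_cons, Matrix.head_cons]
  ext x
  simp only [Set.mem_setOf_eq, Set.mem_insert_iff, Set.mem_singleton_iff]
  constructor
  · rintro ⟨⟨n, rfl⟩, hmin⟩
    have h0mem : stdV 4 0 ∈ latticePts 4 := ⟨![1,0,0,0], coe1⟩
    have hle := hmin (stdV 4 0) h0mem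
    have hk := key2 r₁ r₂ r₃ r₄ r₁₃ r₁₄ r₂₃ r₂₄ r₃₄ r α hα (fun i => (n i : ℝ))
    have hnn := EE2_nonneg h₁ h₂ h₃ h₄ h₁₃ h₁₄ h₂₃ h₂₄ h₃₄ hr n
    have hz : EE2 r₁ r₂ r₃ r₄ r₁₃ r₁₄ r₂₃ r₂₄ r₃₄ r (fun i => (n i : ℝ)) = 0 := by linarith
    rcases EE2_zero h₁ h₂ h₃ h₄ h₁₃ h₁₄ h₂₃ h₂₄ h₃₄ hr n hz with
      ⟨a,b,c,d⟩|⟨a,b,c,d⟩|⟨a,b,c,d⟩|⟨a,b,c,d⟩|⟨a,b,c,d⟩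
    · exact Or.inl (by funext i; fin_cases i <;>
        norm_num [stdV, Pi.single_apply, Fin.ext_iff, finv0, finv1, finv2, finv3] <;>
        first | exact a | exact b | exact c | exact d)
    · refine Or.inr (Or.inl ?_)
      funext i; fin_cases i <;>
        norm_num [stdV, Pi.single_apply, Fin.ext_iff, finv0, finv1, finv2, finv3] <;>
        first | exact a | exact b | exact c | exact d
    · refine Or.inr (Or.inr (Or.inl ?_))
      funext i; fin_cases i <;>
        norm_num [stdV, Pi.single_apply, Fin.ext_iff, finv0, finv1, finv2, finv3] <;>
        first | exact a | exact b | exact c | exact d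
    · refine Or.inr (Or.inr (Or.inr (Or.inl ?_)))
      funext i; fin_cases i <;>
        norm_num [stdV, Pi.single_apply, Fin.ext_iff, finv0, finv1, finv2, finv3] <;>
        first | exact a | exact b | exact c | exact d
    · refine Or.inr (Or.inr (Or.inr (Or.inr ?_)))
      funext i; fin_cases i <;>
        norm_num [stdV, Pi.single_apply, Fin.ext_iff, finv0, finv1, finv2, finv3] <;>
        first | exact a | exact b | exact c | exact d
  · intro hx
    have main : ∀ v : Fin 4 → ℝ, v ∈ latticePts 4 →
        EE2 r₁ r₂ r₃ r₄ r₁₃ r₁₄ r₂₃ r₂₄ r₃₄ r v = 0 →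
        v ∈ latticePts 4 ∧ ∀ b ∈ latticePts 4,
          (v - α) ⬝ᵥ (MV2 r₁ r₂ r₃ r₄ r₁₃ r₁₄ r₂₃ r₂₄ r₃₄ r).mulVec (v - α)
            ≤ (b - α) ⬝ᵥ (MV2 r₁ r₂ r₃ r₄ r₁₃ r₁₄ r₂₃ r₂₄ r₃₄ r).mulVec (b - α) := by
      intro v hv hEv
      refine ⟨hv, fun b hb => ?_⟩
      have hk := key2 r₁ r₂ r₃ r₄ r₁₃ r₁₄ r₂₃ r₂₄ r₃₄ r α hα v
      have := hminD b hb
      linarith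
    rcases hx with rfl|rfl|rfl|rfl|rfl
    · exact main _ ⟨![1,0,0,0], coe1⟩ hE1
    · exact main _ ⟨![0,1,0,0], coe2⟩ hE2
    · exact main _ ⟨![1,1,0,0], coe12⟩ hE12
    · exact main _ ⟨![1,1,1,0], coe3⟩ hE3
    · exact main _ ⟨![1,1,1,1], coe4⟩ hE4

end


/-- For `B` in the interior of the Voronoi cone `V₂`, the simplices
`conv{0, s₁, s₂, s₁+s₂+s₃, s₁+s₂+s₃+s₄}` and `conv{s₁, s₂, s₁+s₂, s₁+s₂+s₃, s₁+s₂+s₃+s₄}`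
are Delaunay cells. -/
theorem delaunay_cells_V2_examples
    (r₁ r₂ r₃ r₄ r₁₃ r₁₄ r₂₃ r₂₄ r₃₄ r : ℝ)
    (h₁ : 0 < r₁) (h₂ : 0 < r₂) (h₃ : 0 < r₃) (h₄ : 0 < r₄)
    (h₁₃ : 0 < r₁₃) (h₁₄ : 0 < r₁₄)
    (h₂₃ : 0 < r₂₃) (h₂₄ : 0 < r₂₄) (h₃₄ : 0 < r₃₄) (hr : 0 < r) :
    IsDelaunayCell
      (fun x y => x ⬝ᵥ (MV2 r₁ r₂ r₃ r₄ r₁₃ r₁₄ r₂₃ r₂₄ r₃₄ r).mulVec y)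
      (convexHull ℝ
        {(0 : Fin 4 → ℝ), stdV 4 0, stdV 4 1,
          stdV 4 0 + stdV 4 1 + stdV 4 2,
          stdV 4 0 + stdV 4 1 + stdV 4 2 + stdV 4 3}) ∧
    IsDelaunayCell
      (fun x y => x ⬝ᵥ (MV2 r₁ r₂ r₃ r₄ r₁₃ r₁₄ r₂₃ r₂₄ r₃₄ r).mulVec y)
      (convexHull ℝ
        {stdV 4 0, stdV 4 1, stdV 4 0 + stdV 4 1,
          stdV 4 0 + stdV 4 1 + stdV 4 2,
          stdV 4 0 + stdV 4 1 + stdV 4 2 + stdV 4 3}) := by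
  have hsurj := surjQ r₁ r₂ r₃ r₄ r₁₃ r₁₄ r₂₃ r₂₄ r₃₄ r h₁ h₂ h₃ h₄ h₁₃ h₁₄ h₂₃ h₂₄ h₃₄ hr
  constructor
  · obtain ⟨α, hα⟩ := hsurj ![(r₁+r₁₃+r₁₄+2*r)/2, (r₂+r₂₃+r₂₄+2*r)/2,
      (r₃-r₁₃-r₂₃+r₃₄)/2, (r₄-r₁₄-r₂₄-r₃₄-2*r)/2]
    rw [Matrix.mulVecLin_apply] at hα
    exact ⟨α, (congrArg (convexHull ℝ)
      (set1_eq h₁ h₂ h₃ h₄ h₁₃ h₁₄ h₂₃ h₂₄ h₃₄ hr α hα)).symm⟩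
  · obtain ⟨α, hα⟩ := hsurj ![(r₁+r₁₃+r₁₄+4*r)/2, (r₂+r₂₃+r₂₄+4*r)/2,
      (r₃-r₁₃-r₂₃+r₃₄-2*r)/2, (r₄-r₁₄-r₂₄-r₃₄-2*r)/2]
    rw [Matrix.mulVecLin_apply] at hα
    exact ⟨α, (congrArg (convexHull ℝ)
      (set2_eq h₁ h₂ h₃ h₄ h₁₃ h₁₄ h₂₃ h₂₄ h₃₄ hr α hα)).symm⟩
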